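/- Let P ⊆ R^q be a set that is closed under coordinatewise maximum and under addition of constant multiples of the all-ones vector, and suppose V ⊆ P is a finite set such that every point of P is of the form max_i (λ_i·1 + v_i) for some reals λ_i and v_i ∈ V (a tropical polytope with vertex set V). For x ∈ R^q, define π(x) to be the coordinatewise maximum over v ∈ V of (min_e (x_e - v_e))·1 + v. Then π(x) ∈ P, π(x) ≤ x coordinatewise, and d_tr(x, π(x)) ≤ d_tr(x, y) for every y ∈ P. -/

import Mathlib

/-- The tropical symmetric distance on `ℝ^q`. -/
noncomputable def dtr (q : ℕ) [NeZero q] (x y : Fin q → ℝ) : ℝ :=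
  (Finset.univ.sup' Finset.univ_nonempty fun i => y i - x i) -
  (Finset.univ.inf' Finset.univ_nonempty fun i => y i - x i)

/-- The all-ones vector in `ℝ^q`. -/
def ones (q : ℕ) : Fin q → ℝ := fun _ => 1

/-- The tropical projection onto the tropical polytope generated by `v 1, …, v r`. -/
noncomputable def tproj (q r : ℕ) [NeZero q] [NeZero r] (v : Fin r → Fin q → ℝ)
    (x : Fin q → ℝ) : Fin q → ℝ :=
  fun j => Finset.univ.sup' Finset.univ_nonempty fun i =>
    (Finset.univ.inf' Finset.univ_nonempty fun e => x e - v i e) + v i j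

theorem stmt5 (q r : ℕ) [NeZero q] [NeZero r] (P : Set (Fin q → ℝ))
    (v : Fin r → Fin q → ℝ)
    -- `P` is closed under coordinatewise maximum
    (hmax : ∀ a ∈ P, ∀ b ∈ P, (fun j => max (a j) (b j)) ∈ P)
    -- `P` is closed under addition of constant multiples of the all-ones vector
    (hone : ∀ a ∈ P, ∀ c : ℝ, a + c • ones q ∈ P)
    -- the vertices lie in `P`
    (hV : ∀ i, v i ∈ P)
    -- every point of `P` is a tropical linear combination of the vertices
    (hgen : ∀ p ∈ P, ∃ lam : Fin r → ℝ,
      p = fun j => Finset.univ.sup' Finset.univ_nonempty fun i => lam i + v i j)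
    (x : Fin q → ℝ) :
    tproj q r v x ∈ P ∧ (∀ j, tproj q r v x j ≤ x j) ∧
      ∀ y ∈ P, dtr q x (tproj q r v x) ≤ dtr q x y := by
  set μ : Fin r → ℝ := fun i => Finset.univ.inf' Finset.univ_nonempty
    (fun e => x e - v i e) with hμ
  -- membership
  have hmem : tproj q r v x ∈ P := by
    have heq : tproj q r v x =
        Finset.univ.sup' Finset.univ_nonempty (fun i => fun j => μ i + v i j) := by
      funext j
      rw [Finset.sup'_apply]
      rfl
    rw [heq]
    apply Finset.sup'_induction
    · intro a ha b hb
      have h := hmax a ha b hb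
      convert h using 1
      rfl
    · intro i _
      have h := hone (v i) (hV i) (μ i)
      convert h using 1
      funext j
      simp [ones]
      ring
  -- below x
  have hle : ∀ j, tproj q r v x j ≤ x j := by
    intro j
    apply Finset.sup'_le
    intro i _
    have : μ i ≤ x j - v i j := Finset.inf'_le _ (Finset.mem_univ j)
    linarith
  refine ⟨hmem, hle, ?_⟩
  intro y hy
  obtain ⟨lam, hyeq⟩ := hgen y hy
  set c : ℝ := Finset.univ.inf' Finset.univ_nonempty (fun e => x e - y e) with hc
  -- key : lam i + c ≤ μ i
  have hkey : ∀ i, lam i + c ≤ μ i := by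
    intro i
    apply Finset.le_inf'
    intro e _
    have h1 : lam i + v i e ≤ y e := by
      rw [hyeq]
      exact Finset.le_sup' (fun i => lam i + v i e) (Finset.mem_univ i)
    have h2 : c ≤ x e - y e := Finset.inf'_le _ (Finset.mem_univ e)
    linarith
  -- y + c ≤ tproj
  have hyc : ∀ j, y j + c ≤ tproj q r v x j := by
    intro j
    rw [hyeq]
    have : (Finset.univ.sup' Finset.univ_nonempty fun i => lam i + v i j)
        ≤ tproj q r v x j - c := by
      apply Finset.sup'_le
      intro i _
      have h3 : μ i + v i j ≤ tproj q r v x j :=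
        Finset.le_sup' (fun i => μ i + v i j) (Finset.mem_univ i)
      have := hkey i
      linarith
    linarith
  -- bound each coordinate gap by dtr x y
  have hgap : ∀ j, x j - tproj q r v x j ≤ dtr q x y := by
    intro j
    have h1 : (Finset.univ.inf' Finset.univ_nonempty fun e => y e - x e) ≤ y j - x j :=
      Finset.inf'_le (fun e => y e - x e) (Finset.mem_univ j)
    have h2 : -(Finset.univ.sup' Finset.univ_nonempty fun e => y e - x e) ≤ c := by
      rw [hc]
      apply Finset.le_inf'
      intro e _
      have h4 : y e - x e ≤ Finset.univ.sup' Finset.univ_nonempty fun e => y e - x e :=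
        Finset.le_sup' (fun e => y e - x e) (Finset.mem_univ e)
      linarith
    have h3 := hyc j
    unfold dtr
    linarith
  -- conclude
  have hsup : (Finset.univ.sup' Finset.univ_nonempty fun i => tproj q r v x i - x i) ≤ 0 := by
    apply Finset.sup'_le
    intro j _
    have := hle j
    linarith
  have hinf : -(dtr q x y) ≤
      Finset.univ.inf' Finset.univ_nonempty fun i => tproj q r v x i - x i := by
    apply Finset.le_inf'
    intro j _
    have := hgap j
    linarith
  unfold dtr at hinf ⊢
  linarith
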